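/- Let c > 0, δ > 0, and d > 0. Suppose H : [0,d) → ℝ is differentiable with H(0) = 1+δ and H′(s) ≥ c·(H(s)² − 1) for all s ∈ [0,d). Then d ≤ (1/(2c))·log((2+δ)/δ). -/

import Mathlib

open Real Filter Set Topology

theorem stmt_1 (c δ d : ℝ) (hc : 0 < c) (hδ : 0 < δ) (hd : 0 < d)
    (H H' : ℝ → ℝ)
    (hderiv : ∀ s ∈ Set.Ico (0 : ℝ) d, HasDerivAt H (H' s) s)
    (h0 : H 0 = 1 + δ)
    (hineq : ∀ s ∈ Set.Ico (0 : ℝ) d, c * ((H s) ^ 2 - 1) ≤ H' s) :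
    d ≤ (1 / (2 * c)) * Real.log ((2 + δ) / δ) := by
  set B := (1 / (2 * c)) * Real.log ((2 + δ) / δ) with hB
  -- main claim: every s₀ ∈ (0, d) satisfies s₀ ≤ B
  have key : ∀ s₀ : ℝ, 0 < s₀ → s₀ < d → s₀ ≤ B := by
    intro s₀ hs₀ hs₀d
    have hmem : ∀ t ∈ Set.Icc (0:ℝ) s₀, t ∈ Set.Ico (0:ℝ) d :=
      fun t ht => ⟨ht.1, lt_of_le_of_lt ht.2 hs₀d⟩
    have hHcont : ContinuousOn H (Set.Icc 0 s₀) :=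
      fun t ht => ((hderiv t (hmem t ht)).continuousAt).continuousWithinAt
    set f : ℝ → ℝ := fun t => c * (H t + 1) with hf
    have hfcont : ContinuousOn f (Set.Icc 0 s₀) :=
      (continuousOn_const.mul (hHcont.add continuousOn_const))
    have hfcont' : ContinuousOn f (Set.Ioo 0 d) := fun t ht =>
      (continuous_const.continuousAt.mul
        (((hderiv t ⟨le_of_lt ht.1, ht.2⟩).continuousAt).add
          continuous_const.continuousAt)).continuousWithinAt
    set Φ : ℝ → ℝ := fun t => ∫ x in (0:ℝ)..t, f x with hΦ
    have hΦ0 : Φ 0 = 0 := intervalIntegral.integral_same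
    have hΦcont : ContinuousOn Φ (Set.Icc 0 s₀) := by
      have hint : MeasureTheory.IntegrableOn f (Set.uIcc 0 s₀) := by
        rw [Set.uIcc_of_le (le_of_lt hs₀)]
        exact hfcont.integrableOn_Icc
      have := intervalIntegral.continuousOn_primitive_interval hint
      rwa [Set.uIcc_of_le (le_of_lt hs₀)] at this
    have hΦderiv : ∀ t ∈ Set.Ioo (0:ℝ) s₀, HasDerivAt Φ (f t) t := by
      intro t ht
      have htd : t ∈ Set.Ioo (0:ℝ) d := ⟨ht.1, lt_trans ht.2 hs₀d⟩
      have hint : IntervalIntegrable f MeasureTheory.volume 0 t := by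
        apply ContinuousOn.intervalIntegrable
        rw [Set.uIcc_of_le (le_of_lt ht.1)]
        exact hfcont.mono (Set.Icc_subset_Icc le_rfl (le_of_lt ht.2))
      exact intervalIntegral.integral_hasDerivAt_right hint
        (hfcont'.stronglyMeasurableAtFilter isOpen_Ioo t htd)
        (hfcont'.continuousAt (isOpen_Ioo.mem_nhds htd))
    -- auxiliary function u = (H - 1) * exp (-Φ) is monotone
    set u : ℝ → ℝ := fun t => (H t - 1) * Real.exp (-Φ t) with hu
    have hucont : ContinuousOn u (Set.Icc 0 s₀) :=
      (hHcont.sub continuousOn_const).mul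
        (Real.continuous_exp.comp_continuousOn hΦcont.neg)
    have humono : MonotoneOn u (Set.Icc 0 s₀) := by
      refine monotoneOn_of_hasDerivWithinAt_nonneg (convex_Icc 0 s₀) hucont
        (f' := fun t => H' t * Real.exp (-Φ t)
          + (H t - 1) * (Real.exp (-Φ t) * (-(f t)))) ?_ ?_
      · intro t ht
        rw [interior_Icc] at ht
        exact ((((hderiv t (hmem t (Set.Ioo_subset_Icc_self ht))).sub_const 1).mul
          (((hΦderiv t ht).neg).exp)).hasDerivWithinAt)
      · intro t ht
        rw [interior_Icc] at ht
        have hi := hineq t (hmem t (Set.Ioo_subset_Icc_self ht))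
        have he : (0:ℝ) < Real.exp (-Φ t) := Real.exp_pos _
        simp only [hf]
        nlinarith [mul_le_mul_of_nonneg_right hi (le_of_lt he)]
    have hu0 : u 0 = δ := by
      simp only [hu, hΦ0, neg_zero, Real.exp_zero, mul_one, h0]; ring
    have hH1 : ∀ t ∈ Set.Icc (0:ℝ) s₀, 1 < H t := by
      intro t ht
      have h := humono (Set.left_mem_Icc.2 (le_of_lt hs₀)) ht ht.1
      rw [hu0] at h
      simp only [hu] at h
      nlinarith [Real.exp_pos (-Φ t)]
    -- the function v = log(H-1) - log(H+1) - 2ct is monotone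
    set v : ℝ → ℝ := fun t => Real.log (H t - 1) - Real.log (H t + 1) - 2*c*t
      with hv
    have hvcont : ContinuousOn v (Set.Icc 0 s₀) :=
      (((hHcont.sub continuousOn_const).log
          (fun t ht => ne_of_gt (by have := hH1 t ht; show (0:ℝ) < H t - 1; linarith))).sub
        ((hHcont.add continuousOn_const).log
          (fun t ht => ne_of_gt (by have := hH1 t ht; show (0:ℝ) < H t + 1; linarith)))).sub
        (continuousOn_const.mul continuousOn_id)
    have hvmono : MonotoneOn v (Set.Icc 0 s₀) := by
      refine monotoneOn_of_hasDerivWithinAt_nonneg (convex_Icc 0 s₀) hvcont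
        (f' := fun t => H' t / (H t - 1) - H' t / (H t + 1) - 2*c) ?_ ?_
      · intro t ht
        rw [interior_Icc] at ht
        have ht' := hmem t (Set.Ioo_subset_Icc_self ht)
        have h1 := hH1 t (Set.Ioo_subset_Icc_self ht)
        have hd1 : HasDerivAt (fun x => Real.log (H x - 1)) (H' t / (H t - 1)) t :=
          ((hderiv t ht').sub_const 1).log (by intro h; linarith)
        have hd2 : HasDerivAt (fun x => Real.log (H x + 1)) (H' t / (H t + 1)) t :=
          ((hderiv t ht').add_const 1).log (by intro h; linarith)
        have hd3 : HasDerivAt (fun x : ℝ => 2*c*x) (2*c) t := by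
          simpa using (hasDerivAt_id t).const_mul (2*c)
        exact ((hd1.sub hd2).sub hd3).hasDerivWithinAt
      · intro t ht
        rw [interior_Icc] at ht
        have h1 := hH1 t (Set.Ioo_subset_Icc_self ht)
        have hi := hineq t (hmem t (Set.Ioo_subset_Icc_self ht))
        have ha : (0:ℝ) < H t - 1 := by linarith
        have hb : (0:ℝ) < H t + 1 := by linarith
        rw [sub_nonneg, div_sub_div _ _ (ne_of_gt ha) (ne_of_gt hb),
          le_div_iff₀ (by positivity)]
        nlinarith
    -- conclude
    have hkey := hvmono (Set.left_mem_Icc.2 (le_of_lt hs₀))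
      (Set.right_mem_Icc.2 (le_of_lt hs₀)) (le_of_lt hs₀)
    have h1 := hH1 s₀ (Set.right_mem_Icc.2 (le_of_lt hs₀))
    have hlt : Real.log (H s₀ - 1) < Real.log (H s₀ + 1) :=
      Real.log_lt_log (by linarith) (by linarith)
    have hv0 : v 0 = Real.log δ - Real.log (2 + δ) := by
      have e1 : H 0 - 1 = δ := by rw [h0]; ring
      have e2 : H 0 + 1 = 2 + δ := by rw [h0]; ring
      simp only [hv, e1, e2, mul_zero, sub_zero]
    rw [hv0] at hkey
    simp only [hv] at hkey
    have h2c : 2 * c * s₀ ≤ Real.log (2 + δ) - Real.log δ := by linarith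
    rw [hB, Real.log_div (by linarith) (ne_of_gt hδ),
      div_mul_eq_mul_div, one_mul, le_div_iff₀ (by linarith : (0:ℝ) < 2*c)]
    linarith
  -- from key, conclude d ≤ B
  by_contra hcon
  push_neg at hcon
  have hm0 : (0:ℝ) ≤ max B 0 := le_max_right _ _
  have hmd : max B 0 < d := max_lt hcon hd
  have h1 : 0 < (max B 0 + d) / 2 := by linarith
  have h2 : (max B 0 + d) / 2 < d := by linarith
  have h3 : B < (max B 0 + d) / 2 :=
    lt_of_le_of_lt (le_max_left B 0) (by linarith)
  linarith [key _ h1 h2]
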